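/- Let u1, u2, v1, v2 ∈ ℝ^p (p ≥ 1) have unit Euclidean length and let σ_u ≥ 0. Then the function f(σ_v) := ‖σ_v·v1 v2ᵀ − σ_u·u1 u2ᵀ‖ (spectral norm) is non-decreasing in σ_v on the range σ_v ∈ [σ_u, ∞). In particular, for any M ≥ 0 with M ≤ σ_u and M ≤ σ_v, one has ‖M·v1 v2ᵀ − M·u1 u2ᵀ‖ ≤ ‖σ_v·v1 v2ᵀ − σ_u·u1 u2ᵀ‖. -/

import Mathlib

open MeasureTheory ProbabilityTheory Real Filter
open scoped BigOperators ENNReal NNReal Matrix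

noncomputable section

namespace AutoCov

variable {Ω : Type*} [MeasurableSpace Ω]

/-- The sub-Gaussian (ψ₂) norm of a real random variable. -/
def psi2 (μ : Measure Ω) (X : Ω → ℝ) : ℝ :=
  sInf {k : ℝ | 0 < k ∧ ∫ ω, (Real.exp ((|X ω| / k) ^ 2) - 1) ∂μ ≤ 1}

/-- The L(q) norm of a real random variable. -/
def Lq (μ : Measure Ω) (q : ℝ) (X : Ω → ℝ) : ℝ :=
  (∫ ω, |X ω| ^ q ∂μ) ^ (1 / q)

/-- Euclidean dot product on `Fin p → ℝ`. -/
def dotp {p : ℕ} (u v : Fin p → ℝ) : ℝ := ∑ i, u i * v i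

/-- Euclidean norm on `Fin p → ℝ`. -/
def vnorm {p : ℕ} (v : Fin p → ℝ) : ℝ := Real.sqrt (∑ i, v i ^ 2)

/-- Spectral (ℓ₂ operator) norm of a rectangular real matrix. -/
def specNorm {m n : ℕ} (A : Matrix (Fin m) (Fin n) ℝ) : ℝ :=
  sSup {x : ℝ | ∃ u : Fin n → ℝ, vnorm u ≤ 1 ∧ x = vnorm (A.mulVec u)}

/-- Largest eigenvalue of a symmetric matrix (Rayleigh quotient formulation). -/
def lamMax {n : ℕ} (A : Matrix (Fin n) (Fin n) ℝ) : ℝ :=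
  sSup {x : ℝ | ∃ u : Fin n → ℝ, vnorm u = 1 ∧ x = dotp u (A.mulVec u)}

/-- Nuclear norm of a matrix, via duality with the spectral norm. -/
def nucNorm {m n : ℕ} (A : Matrix (Fin m) (Fin n) ℝ) : ℝ :=
  sSup {x : ℝ | ∃ B : Matrix (Fin m) (Fin n) ℝ, specNorm B ≤ 1 ∧ x = Matrix.trace (Aᵀ * B)}

/-- Entrywise expectation of a random matrix. -/
def matExp {m n : ℕ} (μ : Measure Ω) (A : Ω → Matrix (Fin m) (Fin n) ℝ) :
    Matrix (Fin m) (Fin n) ℝ :=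
  Matrix.of fun i j => ∫ ω, A ω i j ∂μ

/-- The lag-`m` sample autocovariance matrix built from observations `Y 1, …, Y n`. -/
def sampleAutocov {p : ℕ} (Y : ℤ → Ω → Fin p → ℝ) (n m : ℕ) (ω : Ω) :
    Matrix (Fin p) (Fin p) ℝ :=
  ((n : ℝ) - m)⁻¹ •
    ∑ i ∈ Finset.range (n - m), Matrix.vecMulVec (Y ((i : ℤ) + 1) ω) (Y ((i : ℤ) + 1 + m) ω)

/-- Assumption (A1): `κ1` is the (finite) supremum of ψ₂ norms of projections on the unit
sphere and `κs` the supremum over sign vectors. -/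
def A1 {p : ℕ} (μ : Measure Ω) (Y : ℤ → Ω → Fin p → ℝ) (κ1 κs : ℝ) : Prop :=
  IsLUB {x : ℝ | ∃ (t : ℤ) (u : Fin p → ℝ), vnorm u = 1 ∧
      x = psi2 μ (fun ω => dotp u (Y t ω))} κ1 ∧
  IsLUB {x : ℝ | ∃ (t : ℤ) (v : Fin p → ℝ), (∀ i, v i = 1 ∨ v i = -1) ∧
      x = psi2 μ (fun ω => dotp v (Y t ω))} κs

/-- σ-algebra generated by a family of random elements. -/
def seqSigma {ι E : Type*} [MeasurableSpace E] (f : ι → Ω → E) : MeasurableSpace Ω :=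
  MeasurableSpace.comap (fun ω i => f i ω) MeasurableSpace.pi

/-- Two families of random elements have the same (joint) distribution. -/
def identDistribFam {ι E : Type*} [MeasurableSpace E] (μ : Measure Ω) (f g : ι → Ω → E) : Prop :=
  Measure.map (fun ω i => f i ω) μ = Measure.map (fun ω i => g i ω) μ

/-- Assumption (A2): the coupling property with constants `κ1, γ1, γ2, ε`. -/
def A2 {p : ℕ} (μ : Measure Ω) (Y : ℤ → Ω → Fin p → ℝ) (κ1 γ1 γ2 ε : ℝ) : Prop :=
  ∀ j : ℤ, ∃ Yt : ℤ → Ω → Fin p → ℝ,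
    Indep (seqSigma fun t : {t : ℤ // t ≤ j} => Y t.1)
          (seqSigma fun t : {t : ℤ // j < t} => Yt t.1) μ ∧
    identDistribFam μ (fun t : {t : ℤ // j < t} => Yt t.1) (fun t : {t : ℤ // j < t} => Y t.1) ∧
    ∀ k : ℤ, j + 1 ≤ k →
      Lq μ (1 + ε) (fun ω => vnorm (fun i => Y k ω i - Yt k ω i)) ≤
        γ1 * κ1 * Real.exp (-γ2 * ((k : ℝ) - (j : ℝ) - 1))

/-- Assumption (A3): the coupling property in the direction of unit vectors, with
constants `κ1, γ3, γ4, ε`. -/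
def A3 {p : ℕ} (μ : Measure Ω) (Y : ℤ → Ω → Fin p → ℝ) (κ1 γ3 γ4 ε : ℝ) : Prop :=
  ∀ j : ℤ, ∃ Yt : ℤ → Ω → Fin p → ℝ,
    Indep (seqSigma fun t : {t : ℤ // t ≤ j} => Y t.1)
          (seqSigma fun t : {t : ℤ // j < t} => Yt t.1) μ ∧
    identDistribFam μ (fun t : {t : ℤ // j < t} => Yt t.1) (fun t : {t : ℤ // j < t} => Y t.1) ∧
    ∀ k : ℤ, j + 1 ≤ k → ∀ u : Fin p → ℝ, vnorm u = 1 →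
      Lq μ (1 + ε) (fun ω => dotp (fun i => Y k ω i - Yt k ω i) u) ≤
        γ3 * κ1 * Real.exp (-γ4 * ((k : ℝ) - (j : ℝ) - 1))

/-- Assumption (A4). -/
def A4 {p : ℕ} (μ : Measure Ω) (Y : ℤ → Ω → Fin p → ℝ) (c : ℝ) : Prop :=
  ∀ (t : ℤ) (u : Fin p → ℝ),
    (psi2 μ fun ω => dotp u (Y t ω)) ^ 2 ≤ c * ∫ ω, (dotp u (Y t ω)) ^ 2 ∂μ

/-- Mean-zero random sequence. -/
def meanZero {p : ℕ} (μ : Measure Ω) (Y : ℤ → Ω → Fin p → ℝ) : Prop :=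
  ∀ t i, ∫ ω, Y t ω i ∂μ = 0

/-- (Strict) stationarity of the sequence. -/
def stationary {p : ℕ} (μ : Measure Ω) (Y : ℤ → Ω → Fin p → ℝ) : Prop :=
  ∀ s : ℤ, identDistribFam μ (fun t : ℤ => Y (t + s)) (fun t : ℤ => Y t)

/-- Second-order stationarity: means and autocovariances are shift invariant. -/
def secondOrderStationary {p : ℕ} (μ : Measure Ω) (Y : ℤ → Ω → Fin p → ℝ) : Prop :=
  (∀ (t : ℤ) i, ∫ ω, Y t ω i ∂μ = ∫ ω, Y 0 ω i ∂μ) ∧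
  ∀ (t s m : ℤ), matExp μ (fun ω => Matrix.vecMulVec (Y t ω) (Y (t + m) ω)) =
    matExp μ (fun ω => Matrix.vecMulVec (Y s ω) (Y (s + m) ω))

/-- The sequence is a centered jointly Gaussian sequence: every finite linear combination
of coordinates is a centered Gaussian real random variable. -/
def gaussianSeq {p : ℕ} (μ : Measure Ω) (Y : ℤ → Ω → Fin p → ℝ) : Prop :=
  ∀ (s : Finset (ℤ × Fin p)) (a : ℤ × Fin p → ℝ), ∃ v : ℝ≥0,
    Measure.map (fun ω => ∑ tk ∈ s, a tk * Y tk.1 ω tk.2) μ = gaussianReal 0 v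

instance matrixMeasurableSpace {m n : ℕ} : MeasurableSpace (Matrix (Fin m) (Fin n) ℝ) :=
  MeasurableSpace.pi

/-- `g` is 1-Lipschitz on tuples for the ℓ¹-sum of the norm-like function `N`. -/
def LipSum {ι E : Type*} [Fintype ι] [Sub E] (N : E → ℝ) (g : (ι → E) → ℝ) : Prop :=
  ∀ x y : ι → E, |g x - g y| ≤ ∑ j, N (x j - y j)

/-- τ-measure of dependence between a σ-algebra `A` and a finite family `X` of random
elements, relative to the norm-like function `N`. -/
def tauFam {ι E : Type*} [Fintype ι] [MeasurableSpace E] [Sub E]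
    (μ : Measure Ω) (A : MeasurableSpace Ω) (N : E → ℝ) (X : ι → Ω → E) : ℝ :=
  ∫ ω, sSup {r : ℝ | ∃ g : (ι → E) → ℝ, LipSum N g ∧
      r = (μ[(fun ω' => g fun j => X j ω') | A]) ω - ∫ ω', g (fun j => X j ω') ∂μ} ∂μ

/-- τ-mixing coefficient of the sequence `X` at lag `k`. -/
def tauMix {E : Type*} [MeasurableSpace E] [Sub E]
    (μ : Measure Ω) (N : E → ℝ) (X : ℤ → Ω → E) (k : ℕ) : ℝ :=
  sSup {r : ℝ | ∃ ℓ : ℕ, 0 < ℓ ∧ ∃ (a : ℤ) (js : Fin ℓ → ℤ), StrictMono js ∧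
      (∀ i, a + (k : ℤ) ≤ js i) ∧
      r = (ℓ : ℝ)⁻¹ * tauFam μ (seqSigma fun t : {t : ℤ // t ≤ a} => X t.1) N fun i => X (js i)}

/-- Matrix exponential. -/
def mexp {n : ℕ} (A : Matrix (Fin n) (Fin n) ℝ) : Matrix (Fin n) (Fin n) ℝ :=
  ∑' k : ℕ, ((k.factorial : ℝ))⁻¹ • A ^ k

/-- Spectral radius of a real square matrix (over its complex eigenvalues). -/
def specRad {n : ℕ} (A : Matrix (Fin n) (Fin n) ℝ) : ℝ :=
  sSup {r : ℝ | ∃ z : ℂ, z ∈ spectrum ℂ (A.map (algebraMap ℝ ℂ)) ∧ r = ‖z‖}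

/-- Truncation of a matrix at spectral-norm level `M`. -/
def trunc {m n : ℕ} (M : ℝ) (A : Matrix (Fin m) (Fin n) ℝ) : Matrix (Fin m) (Fin n) ℝ :=
  (min M (specNorm A) / specNorm A) • A

/-- The auxiliary function h(x) = x⁻²(eˣ - x - 1). -/
def hfun (x : ℝ) : ℝ := (Real.exp x - x - 1) / x ^ 2


section HanLiHelpers

private lemma sumsq_nonneg {p : ℕ} (v : Fin p → ℝ) : (0:ℝ) ≤ ∑ i, v i ^ 2 :=
  Finset.sum_nonneg fun _ _ => sq_nonneg _

private lemma vnorm_nonneg' {p : ℕ} (v : Fin p → ℝ) : 0 ≤ vnorm v := Real.sqrt_nonneg _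

private lemma vnorm_sq {p : ℕ} (v : Fin p → ℝ) : vnorm v ^ 2 = ∑ i, v i ^ 2 :=
  Real.sq_sqrt (sumsq_nonneg v)

private lemma sumsq_of_vnorm_one {p : ℕ} {v : Fin p → ℝ} (h : vnorm v = 1) :
    ∑ i, v i ^ 2 = 1 := by
  have := vnorm_sq v; rw [h] at this; simpa using this.symm

private lemma abs_le_one_of_sq {x : ℝ} (h : x^2 ≤ 1) : |x| ≤ 1 := by
  nlinarith [sq_abs x, abs_nonneg x]

private lemma eq_zero_of_sumsq {p : ℕ} {w1 : Fin p → ℝ} (h1 : (0:ℝ) = ∑ i, w1 i ^ 2)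
    (i : Fin p) : w1 i = 0 := by
  have h : w1 i ^ 2 ≤ ∑ j, w1 j ^ 2 :=
    Finset.single_le_sum (fun j _ => sq_nonneg (w1 j)) (Finset.mem_univ i)
  nlinarith [sq_nonneg (w1 i)]

private lemma dotp_comm' {p : ℕ} (u v : Fin p → ℝ) : dotp u v = dotp v u := by
  unfold dotp; exact Finset.sum_congr rfl fun i _ => mul_comm _ _

private lemma dotp_cs {p : ℕ} (u v : Fin p → ℝ) :
    (dotp u v) ^ 2 ≤ (∑ i, u i ^ 2) * ∑ i, v i ^ 2 :=
  Finset.sum_mul_sq_le_sq_mul_sq _ _ _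

private lemma dotp_le {p : ℕ} (u v : Fin p → ℝ) : dotp u v ≤ vnorm u * vnorm v := by
  have h := dotp_cs u v
  have h2 : Real.sqrt ((dotp u v)^2) ≤ Real.sqrt ((∑ i, u i ^ 2) * ∑ i, v i ^ 2) :=
    Real.sqrt_le_sqrt h
  rw [Real.sqrt_sq_eq_abs, Real.sqrt_mul (sumsq_nonneg u)] at h2
  calc dotp u v ≤ |dotp u v| := le_abs_self _
    _ ≤ _ := h2

private lemma mulVec_rankone {p : ℕ} (a b : ℝ) (v1 v2 u1 u2 x : Fin p → ℝ) :
    (a • Matrix.vecMulVec v1 v2 - b • Matrix.vecMulVec u1 u2).mulVec x =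
      fun i => a * dotp v2 x * v1 i - b * dotp u2 x * u1 i := by
  funext i
  show ∑ j, (a * (v1 i * v2 j) - b * (u1 i * u2 j)) * x j = _
  rw [show a * dotp v2 x * v1 i - b * dotp u2 x * u1 i
      = a * v1 i * (∑ j, v2 j * x j) - b * u1 i * (∑ j, u2 j * x j) by
    unfold dotp; ring]
  rw [Finset.mul_sum, Finset.mul_sum, ← Finset.sum_sub_distrib]
  exact Finset.sum_congr rfl fun j _ => by ring

private lemma sumsq_rankone {p : ℕ} (a b C E : ℝ) {v1 u1 : Fin p → ℝ}
    (hv1 : ∑ i, v1 i ^ 2 = 1) (hu1 : ∑ i, u1 i ^ 2 = 1) :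
    ∑ i, (a * C * v1 i - b * E * u1 i) ^ 2
      = a^2 * C^2 - 2*a*b*C*E*(dotp v1 u1) + b^2 * E^2 := by
  have hterm : ∀ i ∈ Finset.univ, (a * C * v1 i - b * E * u1 i) ^ 2
      = a^2*C^2*(v1 i^2) - 2*a*b*C*E*(v1 i * u1 i) + b^2*E^2*(u1 i^2) :=
    fun i _ => by ring
  rw [Finset.sum_congr rfl hterm]
  rw [Finset.sum_add_distrib, Finset.sum_sub_distrib, ← Finset.mul_sum, ← Finset.mul_sum,
    ← Finset.mul_sum, hv1, hu1]
  unfold dotp; ring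

private lemma vnorm_sq_rankone {p : ℕ} (a b : ℝ) {v1 u1 : Fin p → ℝ} (v2 u2 x : Fin p → ℝ)
    (hv1 : vnorm v1 = 1) (hu1 : vnorm u1 = 1) :
    vnorm ((a • Matrix.vecMulVec v1 v2 - b • Matrix.vecMulVec u1 u2).mulVec x) ^ 2
      = a^2 * (dotp v2 x)^2 - 2*a*b*(dotp v2 x)*(dotp u2 x)*(dotp v1 u1)
        + b^2 * (dotp u2 x)^2 := by
  rw [mulVec_rankone, vnorm_sq,
    sumsq_rankone a b (dotp v2 x) (dotp u2 x) (sumsq_of_vnorm_one hv1) (sumsq_of_vnorm_one hu1)]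

private lemma specNorm_set_nonempty {m n : ℕ} (A : Matrix (Fin m) (Fin n) ℝ) :
    (0:ℝ) ∈ {x : ℝ | ∃ u : Fin n → ℝ, vnorm u ≤ 1 ∧ x = vnorm (A.mulVec u)} := by
  refine ⟨0, ?_, ?_⟩
  · simp [vnorm]
  · simp [Matrix.mulVec_zero, vnorm]

private lemma specNorm_le {m n : ℕ} (A : Matrix (Fin m) (Fin n) ℝ) (c : ℝ)
    (h : ∀ x : Fin n → ℝ, vnorm x ≤ 1 → vnorm (A.mulVec x) ≤ c) :
    specNorm A ≤ c := by
  apply csSup_le ⟨0, specNorm_set_nonempty A⟩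
  rintro r ⟨x, hx, rfl⟩
  exact h x hx

private lemma sumsq_le_one {p : ℕ} {x : Fin p → ℝ} (hx : vnorm x ≤ 1) :
    ∑ i, x i ^ 2 ≤ 1 := by
  have := vnorm_sq x
  nlinarith [vnorm_nonneg' x]

private lemma dotp_sq_le_one {p : ℕ} {v x : Fin p → ℝ} (hv : vnorm v = 1)
    (hx : vnorm x ≤ 1) : (dotp v x)^2 ≤ 1 := by
  have h := dotp_cs v x
  rw [sumsq_of_vnorm_one hv] at h
  have := sumsq_le_one hx
  nlinarith

private lemma bddAbove_rankone {p : ℕ} (a b : ℝ) {v1 v2 u1 u2 : Fin p → ℝ}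
    (hv1 : vnorm v1 = 1) (hu1 : vnorm u1 = 1) (hv2 : vnorm v2 = 1) (hu2 : vnorm u2 = 1) :
    BddAbove {x : ℝ | ∃ u : Fin p → ℝ, vnorm u ≤ 1 ∧
      x = vnorm ((a • Matrix.vecMulVec v1 v2 - b • Matrix.vecMulVec u1 u2).mulVec u)} := by
  refine ⟨|a| + |b|, ?_⟩
  rintro r ⟨x, hx, rfl⟩
  have hC : (dotp v2 x)^2 ≤ 1 := dotp_sq_le_one hv2 hx
  have hE : (dotp u2 x)^2 ≤ 1 := dotp_sq_le_one hu2 hx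
  have hal : (dotp v1 u1)^2 ≤ 1 := by
    have h := dotp_cs v1 u1
    rw [sumsq_of_vnorm_one hv1, sumsq_of_vnorm_one hu1] at h
    nlinarith
  have key := vnorm_sq_rankone a b v2 u2 x hv1 hu1
  have hbound : vnorm ((a • Matrix.vecMulVec v1 v2 - b • Matrix.vecMulVec u1 u2).mulVec x) ^ 2
      ≤ (|a| + |b|)^2 := by
    rw [key]
    have h3 : -(2*a*b*(dotp v2 x)*(dotp u2 x)*(dotp v1 u1)) ≤ 2 * |a| * |b| := by
      have habs : |2*a*b*(dotp v2 x)*(dotp u2 x)*(dotp v1 u1)| ≤ 2 * |a| * |b| := by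
        rw [abs_mul, abs_mul, abs_mul, abs_mul, abs_mul]
        have hC' : |dotp v2 x| ≤ 1 := abs_le_one_of_sq hC
        have hE' : |dotp u2 x| ≤ 1 := abs_le_one_of_sq hE
        have hal' : |dotp v1 u1| ≤ 1 := abs_le_one_of_sq hal
        rw [show |(2:ℝ)| = 2 by norm_num]
        have s1 : 2*(|a|)*(|b|)*(|dotp v2 x|)*(|dotp u2 x|)*(|dotp v1 u1|)
            ≤ 2*(|a|)*(|b|)*(|dotp v2 x|)*(|dotp u2 x|) :=
          mul_le_of_le_one_right (by positivity) hal'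
        have s2 : 2*(|a|)*(|b|)*(|dotp v2 x|)*(|dotp u2 x|) ≤ 2*(|a|)*(|b|)*(|dotp v2 x|) :=
          mul_le_of_le_one_right (by positivity) hE'
        have s3 : 2*(|a|)*(|b|)*(|dotp v2 x|) ≤ 2*(|a|)*(|b|) :=
          mul_le_of_le_one_right (by positivity) hC'
        linarith
      nlinarith [neg_abs_le (2*a*b*(dotp v2 x)*(dotp u2 x)*(dotp v1 u1))]
    nlinarith [sq_abs a, sq_abs b, sq_nonneg a, sq_nonneg b, abs_nonneg a, abs_nonneg b]
  have h0 : 0 ≤ |a| + |b| := by positivity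
  nlinarith [vnorm_nonneg' ((a • Matrix.vecMulVec v1 v2 - b • Matrix.vecMulVec u1 u2).mulVec x)]

private lemma bessel2 {p : ℕ} (w1 w2 x : Fin p → ℝ) (horth : dotp w1 w2 = 0)
    (hx : ∑ i, x i ^ 2 ≤ 1) :
    (∑ i, w2 i ^ 2) * (dotp w1 x)^2 + (∑ i, w1 i ^ 2) * (dotp w2 x)^2
      ≤ (∑ i, w1 i ^ 2) * ∑ i, w2 i ^ 2 := by
  set n1 := ∑ i, w1 i ^ 2 with hn1
  set n2 := ∑ i, w2 i ^ 2 with hn2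
  set A := dotp w1 x with hA
  set B := dotp w2 x with hB
  have hD : (0:ℝ) ≤ ∑ i, (n1*n2*x i - n2*A*w1 i - n1*B*w2 i)^2 :=
    Finset.sum_nonneg fun _ _ => sq_nonneg _
  have hExp : ∑ i, (n1*n2*x i - n2*A*w1 i - n1*B*w2 i)^2
      = n1^2*n2^2*(∑ i, x i^2) + n2^2*A^2*n1 + n1^2*B^2*n2
        - 2*n1*n2^2*A*A - 2*n1^2*n2*B*B + 2*n1*n2*A*B*(dotp w1 w2) := by
    have hterm : ∀ i ∈ Finset.univ, (n1*n2*x i - n2*A*w1 i - n1*B*w2 i)^2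
        = n1^2*n2^2*(x i^2) + n2^2*A^2*(w1 i^2) + n1^2*B^2*(w2 i^2)
          - 2*n1*n2^2*A*(w1 i * x i) - 2*n1^2*n2*B*(w2 i * x i)
          + 2*n1*n2*A*B*(w1 i * w2 i) := fun i _ => by ring
    rw [Finset.sum_congr rfl hterm]
    have e1 : ∑ i, w1 i * x i = A := by rw [hA]; rfl
    have e2 : ∑ i, w2 i * x i = B := by rw [hB]; rfl
    simp only [Finset.sum_add_distrib, Finset.sum_sub_distrib, ← Finset.mul_sum]
    rw [e1, e2, hn1, hn2]
    unfold dotp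
    ring
  rw [hExp, horth] at hD
  have hn1' : 0 ≤ n1 := sumsq_nonneg w1
  have hn2' : 0 ≤ n2 := sumsq_nonneg w2
  have key : n1 * n2 * (n2*A^2 + n1*B^2) ≤ n1^2 * n2^2 := by
    nlinarith [mul_le_mul_of_nonneg_left hx (show (0:ℝ) ≤ n1^2*n2^2 by positivity)]
  rcases eq_or_lt_of_le hn1' with h1 | h1
  · have hA0 : A = 0 := by
      rw [hA]; unfold dotp
      have hz : ∀ i, w1 i = 0 := fun i => eq_zero_of_sumsq (w1 := w1) (by rw [← hn1]; exact h1) i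
      exact Finset.sum_eq_zero fun i _ => by rw [hz i]; ring
    rw [hA0, ← h1]; nlinarith
  rcases eq_or_lt_of_le hn2' with h2 | h2
  · have hB0 : B = 0 := by
      rw [hB]; unfold dotp
      have hz : ∀ i, w2 i = 0 := fun i => eq_zero_of_sumsq (w1 := w2) (by rw [← hn2]; exact h2) i
      exact Finset.sum_eq_zero fun i _ => by rw [hz i]; ring
    rw [hB0, ← h2]; nlinarith
  · nlinarith [mul_pos h1 h2]

private lemma key_quad (α β C E : ℝ) (hα : α^2 ≤ 1) (hβ : β^2 ≤ 1)
    (h1 : (C+E)^2 ≤ 2+2*β) (h2 : (C-E)^2 ≤ 2-2*β)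
    (hb : (2-2*β)*(C+E)^2 + (2+2*β)*(C-E)^2 ≤ (2+2*β)*(2-2*β)) :
    C^2 + E^2 - 2*α*C*E ≤ max ((1-α)*(1+β)) ((1+α)*(1-β)) := by
  set m := max ((1-α)*(1+β)) ((1+α)*(1-β)) with hm
  have hm1 : (1-α)*(1+β) ≤ m := le_max_left _ _
  have hm2 : (1+α)*(1-β) ≤ m := le_max_right _ _
  have hα1 : -1 ≤ α := by nlinarith
  have hα2 : α ≤ 1 := by nlinarith
  have hβ1 : -1 ≤ β := by nlinarith
  have hβ2 : β ≤ 1 := by nlinarith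
  have hm0 : 0 ≤ m := le_trans (by nlinarith) hm1
  have hid : C^2 + E^2 - 2*α*C*E = ((1-α)*(C+E)^2 + (1+α)*(C-E)^2)/2 := by ring
  rw [hid]
  have hP : 0 ≤ (C+E)^2 := sq_nonneg _
  have hQ : 0 ≤ (C-E)^2 := sq_nonneg _
  rcases eq_or_lt_of_le (by linarith : (0:ℝ) ≤ 2+2*β) with hn1 | hn1
  · have hP0 : (C+E)^2 = 0 := le_antisymm (by linarith) hP
    rw [hP0]
    nlinarith [mul_le_mul_of_nonneg_left h2 (by linarith : (0:ℝ) ≤ 1+α)]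
  rcases eq_or_lt_of_le (by linarith : (0:ℝ) ≤ 2-2*β) with hn2 | hn2
  · have hQ0 : (C-E)^2 = 0 := le_antisymm (by linarith) hQ
    rw [hQ0]
    nlinarith [mul_le_mul_of_nonneg_left h1 (by linarith : (0:ℝ) ≤ 1-α)]
  · have e1 : 0 ≤ 2*m*((2+2*β)*(2-2*β) - (2-2*β)*(C+E)^2 - (2+2*β)*(C-E)^2) :=
      mul_nonneg (by linarith) (by linarith)
    have e2 : 0 ≤ (2-2*β)*(C+E)^2*(2*m - (1-α)*(2+2*β)) := by
      have h : (1-α)*(2+2*β) ≤ 2*m := by nlinarith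
      exact mul_nonneg (mul_nonneg hn2.le hP) (by linarith)
    have e3 : 0 ≤ (2+2*β)*(C-E)^2*(2*m - (1+α)*(2-2*β)) := by
      have h : (1+α)*(2-2*β) ≤ 2*m := by nlinarith
      exact mul_nonneg (mul_nonneg hn1.le hQ) (by linarith)
    have hpos : 0 < (2+2*β)*(2-2*β) := mul_pos hn1 hn2
    have hid2 : (2+2*β)*(2-2*β) * (2*m - (1-α)*(C+E)^2 - (1+α)*(C-E)^2)
        = 2*m*((2+2*β)*(2-2*β) - (2-2*β)*(C+E)^2 - (2+2*β)*(C-E)^2)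
          + (2-2*β)*(C+E)^2*(2*m - (1-α)*(2+2*β))
          + (2+2*β)*(C-E)^2*(2*m - (1+α)*(2-2*β)) := by ring
    have hfin : (2+2*β)*(2-2*β) * 0 ≤ (2+2*β)*(2-2*β) *
        (2*m - (1-α)*(C+E)^2 - (1+α)*(C-E)^2) := by
      rw [mul_zero, hid2]; linarith
    have hX := le_of_mul_le_mul_left hfin hpos
    linarith

end HanLiHelpers


private def Tval {p : ℕ} (v1 v2 u1 u2 : Fin p → ℝ) : ℝ :=
  max ((1 - dotp v1 u1)*(1 + dotp v2 u2)) ((1 + dotp v1 u1)*(1 - dotp v2 u2))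

private lemma Tval_comm {p : ℕ} (v1 v2 u1 u2 : Fin p → ℝ) :
    Tval u1 u2 v1 v2 = Tval v1 v2 u1 u2 := by
  unfold Tval; rw [dotp_comm' u1 v1, dotp_comm' u2 v2]

private lemma dotp_sq_le_one' {p : ℕ} {v w : Fin p → ℝ} (hv : vnorm v = 1)
    (hw : vnorm w = 1) : (dotp v w)^2 ≤ 1 := by
  have h := dotp_cs v w
  rw [sumsq_of_vnorm_one hv, sumsq_of_vnorm_one hw] at h
  nlinarith

private lemma Tval_nonneg {p : ℕ} {v1 v2 u1 u2 : Fin p → ℝ}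
    (hv1 : vnorm v1 = 1) (hv2 : vnorm v2 = 1) (hu1 : vnorm u1 = 1) (hu2 : vnorm u2 = 1) :
    0 ≤ Tval v1 v2 u1 u2 := by
  have h1 := dotp_sq_le_one' hv1 hu1
  have h2 := dotp_sq_le_one' hv2 hu2
  refine le_trans (mul_nonneg ?_ ?_ : (0:ℝ) ≤ (1 - dotp v1 u1)*(1 + dotp v2 u2)) (le_max_left _ _)
  · nlinarith
  · nlinarith

private lemma dotp_add_right {p : ℕ} (v w1 w2 : Fin p → ℝ) :
    dotp v (fun i => w1 i + w2 i) = dotp v w1 + dotp v w2 := by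
  unfold dotp
  rw [← Finset.sum_add_distrib]
  exact Finset.sum_congr rfl fun i _ => by ring

private lemma dotp_sub_right {p : ℕ} (v w1 w2 : Fin p → ℝ) :
    dotp v (fun i => w1 i - w2 i) = dotp v w1 - dotp v w2 := by
  unfold dotp
  rw [← Finset.sum_sub_distrib]
  exact Finset.sum_congr rfl fun i _ => by ring

private lemma dotp_div_right {p : ℕ} (v w : Fin p → ℝ) (s : ℝ) :
    dotp v (fun i => w i / s) = dotp v w / s := by
  unfold dotp
  rw [Finset.sum_div]
  exact Finset.sum_congr rfl fun i _ => by ring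

private lemma dotp_self_one {p : ℕ} {v : Fin p → ℝ} (hv : vnorm v = 1) : dotp v v = 1 := by
  have := sumsq_of_vnorm_one hv
  unfold dotp
  rw [Finset.sum_congr rfl fun i _ => (sq (v i)).symm]
  exact this

private lemma sumsq_add {p : ℕ} (w1 w2 : Fin p → ℝ) :
    ∑ i, (w1 i + w2 i)^2 = (∑ i, w1 i ^2) + 2 * dotp w1 w2 + ∑ i, w2 i ^2 := by
  have hterm : ∀ i ∈ Finset.univ, (w1 i + w2 i)^2
      = w1 i ^2 + 2*(w1 i * w2 i) + w2 i ^2 := fun i _ => by ring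
  rw [Finset.sum_congr rfl hterm, Finset.sum_add_distrib, Finset.sum_add_distrib,
    ← Finset.mul_sum]
  rfl

private lemma sumsq_sub {p : ℕ} (w1 w2 : Fin p → ℝ) :
    ∑ i, (w1 i - w2 i)^2 = (∑ i, w1 i ^2) - 2 * dotp w1 w2 + ∑ i, w2 i ^2 := by
  have hterm : ∀ i ∈ Finset.univ, (w1 i - w2 i)^2
      = (w1 i ^2 + w2 i ^2) - 2*(w1 i * w2 i) := fun i _ => by ring
  rw [Finset.sum_congr rfl hterm, Finset.sum_sub_distrib, Finset.sum_add_distrib,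
    ← Finset.mul_sum]
  unfold dotp; ring

private lemma sumsq_div {p : ℕ} (w : Fin p → ℝ) (s : ℝ) :
    ∑ i, (w i / s)^2 = (∑ i, w i ^2) / s^2 := by
  rw [Finset.sum_div]
  exact Finset.sum_congr rfl fun i _ => by ring

/-- Upper bound: at equal scales `M`, the spectral norm is at most `√(M² T)`. -/
private lemma upper_M {p : ℕ} (M : ℝ) (hM : 0 ≤ M) {v1 v2 u1 u2 : Fin p → ℝ}
    (hv1 : vnorm v1 = 1) (hv2 : vnorm v2 = 1) (hu1 : vnorm u1 = 1) (hu2 : vnorm u2 = 1) :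
    specNorm (M • Matrix.vecMulVec v1 v2 - M • Matrix.vecMulVec u1 u2)
      ≤ Real.sqrt (M^2 * Tval v1 v2 u1 u2) := by
  apply specNorm_le
  intro x hx
  set α := dotp v1 u1 with hα
  set β := dotp v2 u2 with hβ
  set C := dotp v2 x with hC
  set E := dotp u2 x with hE
  have hxs : ∑ i, x i ^ 2 ≤ 1 := sumsq_le_one hx
  have hα2 : α^2 ≤ 1 := dotp_sq_le_one' hv1 hu1
  have hβ2 : β^2 ≤ 1 := dotp_sq_le_one' hv2 hu2
  -- the two auxiliary vectors
  have hw1sq : ∑ i, (v2 i + u2 i)^2 = 2 + 2*β := by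
    rw [sumsq_add, sumsq_of_vnorm_one hv2, sumsq_of_vnorm_one hu2]; ring
  have hw2sq : ∑ i, (v2 i - u2 i)^2 = 2 - 2*β := by
    rw [sumsq_sub, sumsq_of_vnorm_one hv2, sumsq_of_vnorm_one hu2]; ring
  have hd1 : dotp (fun i => v2 i + u2 i) x = C + E := by
    rw [hC, hE]; unfold dotp; rw [← Finset.sum_add_distrib]
    exact Finset.sum_congr rfl fun i _ => by ring
  have hd2 : dotp (fun i => v2 i - u2 i) x = C - E := by
    rw [hC, hE]; unfold dotp; rw [← Finset.sum_sub_distrib]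
    exact Finset.sum_congr rfl fun i _ => by ring
  have horth : dotp (fun i => v2 i + u2 i) (fun i => v2 i - u2 i) = 0 := by
    rw [dotp_sub_right]
    rw [show dotp (fun i => v2 i + u2 i) v2 = dotp v2 v2 + dotp u2 v2 by
      unfold dotp; rw [← Finset.sum_add_distrib]; exact Finset.sum_congr rfl fun i _ => by ring]
    rw [show dotp (fun i => v2 i + u2 i) u2 = dotp v2 u2 + dotp u2 u2 by
      unfold dotp; rw [← Finset.sum_add_distrib]; exact Finset.sum_congr rfl fun i _ => by ring]
    rw [dotp_self_one hv2, dotp_self_one hu2, dotp_comm' u2 v2]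
    ring
  have hbess := bessel2 (fun i => v2 i + u2 i) (fun i => v2 i - u2 i) x horth hxs
  rw [hw1sq, hw2sq, hd1, hd2] at hbess
  have h1 : (C+E)^2 ≤ 2+2*β := by
    have := dotp_cs (fun i => v2 i + u2 i) x
    rw [hd1, hw1sq] at this
    nlinarith [sumsq_nonneg (fun i => v2 i + u2 i), hw1sq]
  have h2 : (C-E)^2 ≤ 2-2*β := by
    have := dotp_cs (fun i => v2 i - u2 i) x
    rw [hd2, hw2sq] at this
    nlinarith [sumsq_nonneg (fun i => v2 i - u2 i), hw2sq]
  have hkey := key_quad α β C E hα2 hβ2 h1 h2 (by linarith)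
  have hsq := vnorm_sq_rankone M M v2 u2 x hv1 hu1
  rw [← hC, ← hE, ← hα] at hsq
  have hTle : vnorm ((M • Matrix.vecMulVec v1 v2 - M • Matrix.vecMulVec u1 u2).mulVec x) ^ 2
      ≤ M^2 * Tval v1 v2 u1 u2 := by
    rw [hsq]
    have : Tval v1 v2 u1 u2 = max ((1-α)*(1+β)) ((1+α)*(1-β)) := by
      unfold Tval; rw [← hα, ← hβ]
    rw [this]
    nlinarith [sq_nonneg M]
  have hnn := vnorm_nonneg' ((M • Matrix.vecMulVec v1 v2 - M • Matrix.vecMulVec u1 u2).mulVec x)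
  calc vnorm ((M • Matrix.vecMulVec v1 v2 - M • Matrix.vecMulVec u1 u2).mulVec x)
      = Real.sqrt (vnorm ((M • Matrix.vecMulVec v1 v2 - M • Matrix.vecMulVec u1 u2).mulVec x) ^ 2) :=
        (Real.sqrt_sq hnn).symm
    _ ≤ Real.sqrt (M^2 * Tval v1 v2 u1 u2) := Real.sqrt_le_sqrt hTle

set_option maxHeartbeats 1000000 in
private lemma lower_ab {p : ℕ} (a b : ℝ) (hb : 0 ≤ b) (hab : b ≤ a) {v1 v2 u1 u2 : Fin p → ℝ}
    (hv1 : vnorm v1 = 1) (hv2 : vnorm v2 = 1) (hu1 : vnorm u1 = 1) (hu2 : vnorm u2 = 1) :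
    Real.sqrt (b^2 * Tval v1 v2 u1 u2)
      ≤ specNorm (a • Matrix.vecMulVec v1 v2 - b • Matrix.vecMulVec u1 u2) := by
  have hbdd := bddAbove_rankone a b hv1 hu1 hv2 hu2
  set α := dotp v1 u1 with hα
  set β := dotp v2 u2 with hβ
  have hα2 : α^2 ≤ 1 := dotp_sq_le_one' hv1 hu1
  have hβ2 : β^2 ≤ 1 := dotp_sq_le_one' hv2 hu2
  have hspec0 : (0:ℝ) ≤ specNorm (a • Matrix.vecMulVec v1 v2 - b • Matrix.vecMulVec u1 u2) :=
    le_csSup hbdd (specNorm_set_nonempty _)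
  have hTv : Tval v1 v2 u1 u2 = max ((1-α)*(1+β)) ((1+α)*(1-β)) := by
    unfold Tval; rw [← hα, ← hβ]
  rcases le_total α β with hcase | hcase
  · -- T = (1-α)(1+β), witness (v2+u2)/√(2+2β)
    have hTeq : Tval v1 v2 u1 u2 = (1-α)*(1+β) := by
      rw [hTv]; exact max_eq_left (by nlinarith)
    rcases eq_or_lt_of_le (show (0:ℝ) ≤ 2+2*β by nlinarith) with hn | hn
    · rw [hTeq, show (1-α)*(1+β) = 0 by nlinarith, mul_zero, Real.sqrt_zero]
      exact hspec0
    · set s := Real.sqrt (2+2*β) with hs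
      have hs0 : 0 < s := Real.sqrt_pos.mpr hn
      have hs2 : s^2 = 2+2*β := Real.sq_sqrt hn.le
      set x := fun i => (v2 i + u2 i)/s with hxdef
      have hw1sq : ∑ i, (v2 i + u2 i)^2 = 2 + 2*β := by
        rw [sumsq_add, sumsq_of_vnorm_one hv2, sumsq_of_vnorm_one hu2]; ring
      have hxs : ∑ i, x i ^2 = 1 := by
        simp only [hxdef]
        rw [sumsq_div, hw1sq, hs2]
        exact div_self (by linarith)
      have hxn : vnorm x ≤ 1 := by
        unfold vnorm; rw [hxs, Real.sqrt_one]
      have hCval : dotp v2 x = (1+β)/s := by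
        simp only [hxdef]
        rw [dotp_div_right, dotp_add_right, dotp_self_one hv2, ← hβ]
      have hEval : dotp u2 x = (1+β)/s := by
        simp only [hxdef]
        rw [dotp_div_right, dotp_add_right, dotp_comm' u2 v2, dotp_self_one hu2, ← hβ]
        ring_nf
      have hsq := vnorm_sq_rankone a b v2 u2 x hv1 hu1
      rw [hCval, hEval, ← hα] at hsq
      have hCsq : ((1+β)/s)^2 = (1+β)/2 := by
        rw [div_pow, hs2]
        rw [show (1+β)^2 = (1+β)*(1+β) by ring]
        rw [show (2:ℝ)+2*β = 2*(1+β) by ring]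
        rw [mul_comm (2:ℝ) (1+β), div_eq_div_iff (by nlinarith) (by norm_num)]
        ring
      have hval : vnorm ((a • Matrix.vecMulVec v1 v2 - b • Matrix.vecMulVec u1 u2).mulVec x) ^ 2
          = (a^2 + b^2 - 2*a*b*α) * ((1+β)/2) := by
        rw [hsq]
        rw [show a ^ 2 * ((1 + β) / s) ^ 2 - 2 * a * b * ((1 + β) / s) * ((1 + β) / s) * α
            + b ^ 2 * ((1 + β) / s) ^ 2
            = (a^2 + b^2 - 2*a*b*α) * ((1+β)/s)^2 by ring, hCsq]
      have hge : b^2 * Tval v1 v2 u1 u2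
          ≤ vnorm ((a • Matrix.vecMulVec v1 v2 - b • Matrix.vecMulVec u1 u2).mulVec x) ^ 2 := by
        rw [hval, hTeq]
        nlinarith [mul_nonneg (sub_nonneg.mpr hab) (show (0:ℝ) ≤ a + b - 2*b*α by nlinarith)]
      have hnn := vnorm_nonneg' ((a • Matrix.vecMulVec v1 v2 - b • Matrix.vecMulVec u1 u2).mulVec x)
      calc Real.sqrt (b^2 * Tval v1 v2 u1 u2)
          ≤ Real.sqrt (vnorm ((a • Matrix.vecMulVec v1 v2 - b • Matrix.vecMulVec u1 u2).mulVec x) ^ 2) :=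
            Real.sqrt_le_sqrt hge
        _ = vnorm ((a • Matrix.vecMulVec v1 v2 - b • Matrix.vecMulVec u1 u2).mulVec x) :=
            Real.sqrt_sq hnn
        _ ≤ _ := le_csSup hbdd ⟨x, hxn, rfl⟩
  · -- T = (1+α)(1-β), witness (v2-u2)/√(2-2β)
    have hTeq : Tval v1 v2 u1 u2 = (1+α)*(1-β) := by
      rw [hTv]; exact max_eq_right (by nlinarith)
    rcases eq_or_lt_of_le (show (0:ℝ) ≤ 2-2*β by nlinarith) with hn | hn
    · rw [hTeq, show (1+α)*(1-β) = 0 by nlinarith, mul_zero, Real.sqrt_zero]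
      exact hspec0
    · set s := Real.sqrt (2-2*β) with hs
      have hs0 : 0 < s := Real.sqrt_pos.mpr hn
      have hs2 : s^2 = 2-2*β := Real.sq_sqrt hn.le
      set x := fun i => (v2 i - u2 i)/s with hxdef
      have hw2sq : ∑ i, (v2 i - u2 i)^2 = 2 - 2*β := by
        rw [sumsq_sub, sumsq_of_vnorm_one hv2, sumsq_of_vnorm_one hu2]; ring
      have hxs : ∑ i, x i ^2 = 1 := by
        simp only [hxdef]
        rw [sumsq_div, hw2sq, hs2]
        exact div_self (by linarith)
      have hxn : vnorm x ≤ 1 := by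
        unfold vnorm; rw [hxs, Real.sqrt_one]
      have hCval : dotp v2 x = (1-β)/s := by
        simp only [hxdef]
        rw [dotp_div_right, dotp_sub_right, dotp_self_one hv2, ← hβ]
      have hEval : dotp u2 x = -((1-β)/s) := by
        simp only [hxdef]
        rw [dotp_div_right, dotp_sub_right, dotp_comm' u2 v2, dotp_self_one hu2, ← hβ]
        ring_nf
      have hsq := vnorm_sq_rankone a b v2 u2 x hv1 hu1
      rw [hCval, hEval, ← hα] at hsq
      have hCsq : ((1-β)/s)^2 = (1-β)/2 := by
        rw [div_pow, hs2]
        rw [show (1-β)^2 = (1-β)*(1-β) by ring]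
        rw [show (2:ℝ)-2*β = 2*(1-β) by ring]
        rw [mul_comm (2:ℝ) (1-β), div_eq_div_iff (by nlinarith) (by norm_num)]
        ring
      have hval : vnorm ((a • Matrix.vecMulVec v1 v2 - b • Matrix.vecMulVec u1 u2).mulVec x) ^ 2
          = (a^2 + b^2 + 2*a*b*α) * ((1-β)/2) := by
        rw [hsq]
        rw [show a ^ 2 * ((1 - β) / s) ^ 2 - 2 * a * b * ((1 - β) / s) * (-((1 - β) / s)) * α
            + b ^ 2 * (-((1 - β) / s)) ^ 2
            = (a^2 + b^2 + 2*a*b*α) * ((1-β)/s)^2 by ring, hCsq]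
      have hge : b^2 * Tval v1 v2 u1 u2
          ≤ vnorm ((a • Matrix.vecMulVec v1 v2 - b • Matrix.vecMulVec u1 u2).mulVec x) ^ 2 := by
        rw [hval, hTeq]
        nlinarith [mul_nonneg (sub_nonneg.mpr hab) (show (0:ℝ) ≤ a + b + 2*b*α by nlinarith)]
      have hnn := vnorm_nonneg' ((a • Matrix.vecMulVec v1 v2 - b • Matrix.vecMulVec u1 u2).mulVec x)
      calc Real.sqrt (b^2 * Tval v1 v2 u1 u2)
          ≤ Real.sqrt (vnorm ((a • Matrix.vecMulVec v1 v2 - b • Matrix.vecMulVec u1 u2).mulVec x) ^ 2) :=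
            Real.sqrt_le_sqrt hge
        _ = vnorm ((a • Matrix.vecMulVec v1 v2 - b • Matrix.vecMulVec u1 u2).mulVec x) :=
            Real.sqrt_sq hnn
        _ ≤ _ := le_csSup hbdd ⟨x, hxn, rfl⟩

private lemma vnorm_combo {p : ℕ} (θ : ℝ) (h0 : 0 ≤ θ) (h1 : θ ≤ 1) (y z : Fin p → ℝ) :
    vnorm (fun i => θ * y i + (1-θ) * z i) ≤ θ * vnorm y + (1-θ) * vnorm z := by
  have hrhs : 0 ≤ θ * vnorm y + (1-θ) * vnorm z :=
    add_nonneg (mul_nonneg h0 (vnorm_nonneg' y))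
      (mul_nonneg (by linarith) (vnorm_nonneg' z))
  have hexp : ∑ i, (θ * y i + (1-θ) * z i)^2
      = θ^2*(∑ i, y i ^2) + 2*θ*(1-θ)*(dotp y z) + (1-θ)^2*(∑ i, z i ^2) := by
    have hterm : ∀ i ∈ Finset.univ, (θ * y i + (1-θ) * z i)^2
        = θ^2*(y i ^2) + 2*θ*(1-θ)*(y i * z i) + (1-θ)^2*(z i ^2) := fun i _ => by ring
    rw [Finset.sum_congr rfl hterm, Finset.sum_add_distrib, Finset.sum_add_distrib,
      ← Finset.mul_sum, ← Finset.mul_sum, ← Finset.mul_sum]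
    rfl
  have hsq : ∑ i, (θ * y i + (1-θ) * z i)^2 ≤ (θ * vnorm y + (1-θ) * vnorm z)^2 := by
    rw [hexp]
    have hd := dotp_le y z
    have hy := vnorm_sq y
    have hz := vnorm_sq z
    nlinarith [mul_le_mul_of_nonneg_left hd
      (mul_nonneg (mul_nonneg (by norm_num : (0:ℝ) ≤ 2) h0) (by linarith : (0:ℝ) ≤ 1-θ)),
      vnorm_nonneg' y, vnorm_nonneg' z]
  calc vnorm (fun i => θ * y i + (1-θ) * z i)
      = Real.sqrt (∑ i, (θ * y i + (1-θ) * z i)^2) := rfl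
    _ ≤ Real.sqrt ((θ * vnorm y + (1-θ) * vnorm z)^2) := Real.sqrt_le_sqrt hsq
    _ = θ * vnorm y + (1-θ) * vnorm z := Real.sqrt_sq hrhs

private lemma vnorm_neg' {p : ℕ} (y : Fin p → ℝ) : vnorm (-y) = vnorm y := by
  unfold vnorm
  congr 1
  exact Finset.sum_congr rfl fun i _ => by simp [Pi.neg_apply]

private lemma specNorm_neg {m n : ℕ} (A : Matrix (Fin m) (Fin n) ℝ) :
    specNorm (-A) = specNorm A := by
  have h : ∀ x : Fin n → ℝ, vnorm ((-A).mulVec x) = vnorm (A.mulVec x) := by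
    intro x
    rw [Matrix.neg_mulVec, vnorm_neg']
  unfold specNorm
  congr 1
  ext r
  simp only [Set.mem_setOf_eq]
  constructor
  · rintro ⟨x, hx, rfl⟩; exact ⟨x, hx, h x⟩
  · rintro ⟨x, hx, rfl⟩; exact ⟨x, hx, (h x).symm⟩

/-- Lemma 4.7 of Han–Li: monotonicity of the spectral-norm distance
between scaled rank-one matrices. -/
theorem rank_one_distance_monotone
    {p : ℕ} (hp : 0 < p)
    (u1 u2 v1 v2 : Fin p → ℝ)
    (hu1 : vnorm u1 = 1) (hu2 : vnorm u2 = 1) (hv1 : vnorm v1 = 1) (hv2 : vnorm v2 = 1)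
    (σu : ℝ) (hσu : 0 ≤ σu) :
    MonotoneOn (fun σv : ℝ =>
        specNorm (σv • Matrix.vecMulVec v1 v2 - σu • Matrix.vecMulVec u1 u2))
      (Set.Ici σu) ∧
    ∀ M σv : ℝ, 0 ≤ M → M ≤ σu → M ≤ σv →
      specNorm (M • Matrix.vecMulVec v1 v2 - M • Matrix.vecMulVec u1 u2) ≤
        specNorm (σv • Matrix.vecMulVec v1 v2 - σu • Matrix.vecMulVec u1 u2) := by
  constructor
  · intro s hs s' hs' hss'
    simp only [Set.mem_Ici] at hs hs'
    dsimp only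
    rcases eq_or_lt_of_le hs' with heq | hlt
    · have hseq : s = s' := le_antisymm hss' (by rw [← heq]; exact hs)
      rw [hseq]
    · have hne : s' - σu ≠ 0 := ne_of_gt (by linarith)
      set θ := (s' - s)/(s' - σu) with hθ
      have hθ0 : 0 ≤ θ := div_nonneg (by linarith) (by linarith)
      have hθ1 : θ ≤ 1 := (div_le_one (by linarith)).mpr (by linarith)
      have haux : θ * (s' - σu) = s' - s := by
        rw [hθ]; exact div_mul_cancel₀ _ hne
      have hcomb : θ*σu + (1-θ)*s' = s := by nlinarith [haux]
      have hfσu_le : specNorm (σu • Matrix.vecMulVec v1 v2 - σu • Matrix.vecMulVec u1 u2)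
          ≤ Real.sqrt (σu^2 * Tval v1 v2 u1 u2) := upper_M σu hσu hv1 hv2 hu1 hu2
      have hfs'_ge : Real.sqrt (σu^2 * Tval v1 v2 u1 u2)
          ≤ specNorm (s' • Matrix.vecMulVec v1 v2 - σu • Matrix.vecMulVec u1 u2) :=
        lower_ab s' σu hσu (le_trans hs hss') hv1 hv2 hu1 hu2
      have hks := le_trans hfσu_le hfs'_ge
      apply specNorm_le
      intro x hx
      have hbdd1 := bddAbove_rankone σu σu hv1 hu1 hv2 hu2
      have hbdd2 := bddAbove_rankone s' σu hv1 hu1 hv2 hu2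
      have h1 : vnorm ((σu • Matrix.vecMulVec v1 v2 - σu • Matrix.vecMulVec u1 u2).mulVec x)
          ≤ specNorm (σu • Matrix.vecMulVec v1 v2 - σu • Matrix.vecMulVec u1 u2) :=
        le_csSup hbdd1 ⟨x, hx, rfl⟩
      have h2 : vnorm ((s' • Matrix.vecMulVec v1 v2 - σu • Matrix.vecMulVec u1 u2).mulVec x)
          ≤ specNorm (s' • Matrix.vecMulVec v1 v2 - σu • Matrix.vecMulVec u1 u2) :=
        le_csSup hbdd2 ⟨x, hx, rfl⟩
      have hrw : ((s • Matrix.vecMulVec v1 v2 - σu • Matrix.vecMulVec u1 u2).mulVec x)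
          = fun i => θ * ((σu • Matrix.vecMulVec v1 v2 - σu • Matrix.vecMulVec u1 u2).mulVec x) i
            + (1-θ) * ((s' • Matrix.vecMulVec v1 v2 - σu • Matrix.vecMulVec u1 u2).mulVec x) i := by
        rw [mulVec_rankone, mulVec_rankone, mulVec_rankone]
        funext i
        simp only
        linear_combination (-(dotp v2 x * v1 i)) * hcomb
      calc vnorm ((s • Matrix.vecMulVec v1 v2 - σu • Matrix.vecMulVec u1 u2).mulVec x)
          = vnorm (fun i =>
              θ * ((σu • Matrix.vecMulVec v1 v2 - σu • Matrix.vecMulVec u1 u2).mulVec x) i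
              + (1-θ) * ((s' • Matrix.vecMulVec v1 v2 - σu • Matrix.vecMulVec u1 u2).mulVec x) i) := by
            rw [hrw]
        _ ≤ θ * vnorm ((σu • Matrix.vecMulVec v1 v2 - σu • Matrix.vecMulVec u1 u2).mulVec x)
            + (1-θ) * vnorm ((s' • Matrix.vecMulVec v1 v2 - σu • Matrix.vecMulVec u1 u2).mulVec x) :=
            vnorm_combo θ hθ0 hθ1 _ _
        _ ≤ θ * specNorm (s' • Matrix.vecMulVec v1 v2 - σu • Matrix.vecMulVec u1 u2)
            + (1-θ) * specNorm (s' • Matrix.vecMulVec v1 v2 - σu • Matrix.vecMulVec u1 u2) :=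
            add_le_add (mul_le_mul_of_nonneg_left (le_trans h1 hks) hθ0)
              (mul_le_mul_of_nonneg_left h2 (by linarith))
        _ = specNorm (s' • Matrix.vecMulVec v1 v2 - σu • Matrix.vecMulVec u1 u2) := by ring
  · intro M σv hM hMσu hMσv
    have hup := upper_M M hM hv1 hv2 hu1 hu2
    have hT0 := Tval_nonneg hv1 hv2 hu1 hu2
    rcases le_total σu σv with h | h
    · have hlow := lower_ab σv σu hσu h hv1 hv2 hu1 hu2
      refine le_trans hup (le_trans (Real.sqrt_le_sqrt ?_) hlow)
      exact mul_le_mul_of_nonneg_right (by nlinarith) hT0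
    · have hσv0 : 0 ≤ σv := le_trans hM hMσv
      have hlow := lower_ab σu σv hσv0 h hu1 hu2 hv1 hv2
      rw [Tval_comm] at hlow
      have hneg : specNorm (σv • Matrix.vecMulVec v1 v2 - σu • Matrix.vecMulVec u1 u2)
          = specNorm (σu • Matrix.vecMulVec u1 u2 - σv • Matrix.vecMulVec v1 v2) := by
        rw [← specNorm_neg (σu • Matrix.vecMulVec u1 u2 - σv • Matrix.vecMulVec v1 v2), neg_sub]
      rw [hneg]
      refine le_trans hup (le_trans (Real.sqrt_le_sqrt ?_) hlow)
      exact mul_le_mul_of_nonneg_right (by nlinarith) hT0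

end AutoCov

end
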